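/- For every unbiased function f : {-1,1}^3 → {-1,1} and every p ∈ (0, 1/2), it holds that Φ_p(Maj_3) ≥ Φ_p(f). -/

import Mathlib

open Finset

noncomputable def chi (b : Bool) : ℝ := if b then 1 else -1

noncomputable def maj (n : ℕ) (x : Fin n → Bool) : ℝ :=
  Real.sign (∑ i, chi (x i))

def eVec (n : ℕ) : Fin n → Bool := fun i => decide ((i : ℕ) < (n - 1) / 2 + 1)

noncomputable def gfun (n : ℕ) (x : Fin n → Bool) : ℝ :=
  if x = eVec n ∨ x = (fun i => !(eVec n i)) then - maj n x else maj n x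

noncomputable def stab (n : ℕ) (ρ : ℝ) (f : (Fin n → Bool) → ℝ) : ℝ :=
  (1 / 2 ^ n) * ∑ x : Fin n → Bool, ∑ z : Fin n → Bool,
    (∏ i, if z i then (1 - ρ) / 2 else (1 + ρ) / 2) * (f x * f (fun i => xor (x i) (z i)))

noncomputable def phi (n : ℕ) (p : ℝ) (f : (Fin n → Bool) → ℝ) : ℝ :=
  ∑ s : Fin n → Bool, (∏ i, if s i then p else 1 - p) *
    ((1 / 2 ^ n) * ∑ x : Fin n → Bool,
      |(1 / 2 ^ n) * ∑ z : Fin n → Bool, f (fun i => if s i then x i else z i)|)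

noncomputable def binomPMF (m : ℕ) (q : ℝ) (k : ℕ) : ℝ :=
  (m.choose k : ℝ) * q ^ k * (1 - q) ^ (m - k)

noncomputable def binomCollision (m : ℕ) (q : ℝ) : ℝ :=
  ∑ k ∈ Finset.range (m + 1), (binomPMF m q k) ^ 2

def e3 : Bool × Bool × Bool ≃ (Fin 3 → Bool) where
  toFun := fun (a,b,c) => ![a,b,c]
  invFun := fun x => (x 0, x 1, x 2)
  left_inv := by decide
  right_inv := by decide

lemma sum_pi3' (g : (Fin 3 → Bool) → ℝ) :
    ∑ x : Fin 3 → Bool, g x =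
      g ![false,false,false] + g ![false,false,true] + g ![false,true,false] + g ![false,true,true]
      + g ![true,false,false] + g ![true,false,true] + g ![true,true,false] + g ![true,true,true] := by
  rw [← Equiv.sum_comp e3, Fintype.sum_prod_type]
  show _ = _
  simp [Fintype.sum_prod_type, e3]
  ring

lemma combine (s x z : Fin 3 → Bool) :
    (fun i => if s i then x i else z i) =
      ![if s 0 then x 0 else z 0, if s 1 then x 1 else z 1, if s 2 then x 2 else z 2] := by
  funext i; fin_cases i <;> rfl

lemma maj_val (a b c : Bool) : maj 3 ![a,b,c] = if a && b || a && c || b && c then 1 else -1 := by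
  cases a <;> cases b <;> cases c <;>
    simp [maj, chi, Fin.sum_univ_three] <;> norm_num [Real.sign_of_pos, Real.sign_of_neg]

lemma phi_maj (p : ℝ) : phi 3 p (maj 3) =
    p^3 + (3/2) * p * (1-p)^2 + (3/2) * p^2 * (1-p) := by
  rw [phi, sum_pi3']
  simp only [sum_pi3', combine, Fin.prod_univ_three, Matrix.cons_val_zero, Matrix.cons_val_one,
    Matrix.head_cons, Matrix.cons_val_two, Matrix.tail_cons, maj_val]
  norm_num [abs_div]
  ring

set_option maxHeartbeats 4000000 in
theorem stmt11 (f : (Fin 3 → Bool) → ℝ) (hf : ∀ x, f x = 1 ∨ f x = -1)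
    (hbias : ∑ x : Fin 3 → Bool, f x = 0)
    (p : ℝ) (hp0 : 0 < p) (hp1 : p < 1 / 2) :
    phi 3 p f ≤ phi 3 p (maj 3) := by
  have h1p : 0 < 1 - p := by linarith
  have h2p : 0 < 1 - 2 * p := by linarith
  rw [phi_maj, phi, sum_pi3']
  rw [sum_pi3'] at hbias
  simp only [sum_pi3', combine, Fin.prod_univ_three, Matrix.cons_val_zero, Matrix.cons_val_one,
    Matrix.head_cons, Matrix.cons_val_two, Matrix.tail_cons]
  simp only [Bool.false_eq_true, if_false, ite_false, if_true, ite_true]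
  rcases hf ![false,false,false] with h0|h0 <;>
  rcases hf ![false,false,true] with h1|h1 <;>
  rcases hf ![false,true,false] with h2|h2 <;>
  rcases hf ![false,true,true] with h3|h3 <;>
  rcases hf ![true,false,false] with h4|h4 <;>
  rcases hf ![true,false,true] with h5|h5 <;>
  rcases hf ![true,true,false] with h6|h6 <;>
  rcases hf ![true,true,true] with h7|h7 <;>
  rw [h0, h1, h2, h3, h4, h5, h6, h7] at hbias ⊢ <;>
  norm_num [abs_div] at hbias <;> norm_num [abs_div] <;>
  nlinarith [mul_pos (mul_pos hp0 h1p) h2p, mul_pos (mul_pos hp0 hp0) h1p,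
    mul_pos (mul_pos hp0 hp0) hp0]
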